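/- Inverse optimization recursion: suppose demand values D_c > 0 and sorted cutoffs 0 ≤ p_1 ≤ ⋯ ≤ p_n < 1 (p_{n+1} = 1) arise from the single-score MNL model with parameters γ normalized so Σ_c γ_c = 1. Then γ_n = D_n/(1 − p_n), and for c < n, γ_c = D_c / (Σ_{d=c}^{n} (p_{d+1} − p_d)/(1 − Σ_{j=d+1}^{n} γ_j)); i.e., these recursively defined values are the unique positive solution of the system D_c = Σ_{d=c}^{n} (γ_c/Σ_{i=1}^{d} γ_i)(p_{d+1} − p_d) with Σ γ_c = 1. -/
import Mathlib

open Finset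

/-- Cutoff of the next school, extended with `p_{n+1} = 1`. -/
noncomputable def nextCutoff {n : ℕ} (p : Fin n → ℝ) (d : Fin n) : ℝ :=
  if h : (d : ℕ) + 1 < n then p ⟨(d : ℕ) + 1, h⟩ else 1

lemma mnl_aux_compl {n : ℕ} (γ : Fin n → ℝ) (hγsum : ∑ i, γ i = 1) (d : Fin n) :
    (∑ i ∈ Iic d, γ i) = 1 - ∑ j ∈ Ioi d, γ j := by
  have h : (Iic d)ᶜ = Ioi d := by ext j; simp
  have := Finset.sum_add_sum_compl (Iic d) γ
  rw [h, hγsum] at this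
  linarith

lemma mnl_aux_next_sub_nonneg {n : ℕ} (p : Fin n → ℝ) (hp : Monotone p)
    (hp1 : ∀ i, p i < 1) (d : Fin n) : 0 ≤ nextCutoff p d - p d := by
  unfold nextCutoff
  split
  · have : d ≤ (⟨(d : ℕ) + 1, by assumption⟩ : Fin n) := by
      simp [Fin.le_def]
    linarith [hp this]
  · linarith [hp1 d]

lemma mnl_aux_Spos {n : ℕ} (hn : 0 < n) (p : Fin n → ℝ) (hp : Monotone p)
    (hp1 : ∀ i, p i < 1) (γ : Fin n → ℝ) (hγ : ∀ i, 0 < γ i) (c : Fin n) :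
    0 < ∑ d ∈ Ici c, (nextCutoff p d - p d) / (∑ i ∈ Iic d, γ i) := by
  have hden : ∀ d : Fin n, 0 < ∑ i ∈ Iic d, γ i :=
    fun d => Finset.sum_pos (fun i _ => hγ i) ⟨d, by simp⟩
  apply Finset.sum_pos'
  · intro d _
    exact div_nonneg (mnl_aux_next_sub_nonneg p hp hp1 d) (hden d).le
  · refine ⟨⟨n - 1, by omega⟩, by simp [Fin.le_def]; omega, ?_⟩
    have hnext : nextCutoff p ⟨n - 1, by omega⟩ = 1 := by
      unfold nextCutoff
      rw [dif_neg]
      simp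
      omega
    rw [hnext]
    exact div_pos (by linarith [hp1 ⟨n - 1, by omega⟩]) (hden _)

lemma mnl_aux_fac {n : ℕ} (p D : Fin n → ℝ) (γ : Fin n → ℝ)
    (hsys : ∀ c, D c = ∑ d ∈ Ici c,
      (γ c / ∑ i ∈ Iic d, γ i) * (nextCutoff p d - p d)) (c : Fin n) :
    D c = γ c * ∑ d ∈ Ici c, (nextCutoff p d - p d) / (∑ i ∈ Iic d, γ i) := by
  rw [hsys c, Finset.mul_sum]
  exact Finset.sum_congr rfl fun d _ => by ring

theorem mnl_inverse_optimization {n : ℕ} (hn : 0 < n)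
    (p D : Fin n → ℝ)
    (hp : Monotone p) (hp0 : ∀ i, 0 ≤ p i) (hp1 : ∀ i, p i < 1)
    (hD : ∀ i, 0 < D i)
    (γ : Fin n → ℝ) (hγ : ∀ i, 0 < γ i) (hγsum : ∑ i, γ i = 1)
    (hsys : ∀ c, D c = ∑ d ∈ Ici c,
      (γ c / ∑ i ∈ Iic d, γ i) * (nextCutoff p d - p d)) :
    γ ⟨n - 1, by omega⟩ = D ⟨n - 1, by omega⟩ / (1 - p ⟨n - 1, by omega⟩) ∧
    (∀ c : Fin n, (c : ℕ) < n - 1 →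
      γ c = D c / ∑ d ∈ Ici c,
        (nextCutoff p d - p d) / (1 - ∑ j ∈ Ioi d, γ j)) ∧
    (∀ γ' : Fin n → ℝ, (∀ i, 0 < γ' i) → ∑ i, γ' i = 1 →
      (∀ c, D c = ∑ d ∈ Ici c,
        (γ' c / ∑ i ∈ Iic d, γ' i) * (nextCutoff p d - p d)) →
      γ' = γ) := by
  set m : Fin n := ⟨n - 1, by omega⟩ with hm
  have hmv : (m : ℕ) = n - 1 := rfl
  refine ⟨?_, ?_, ?_⟩
  · -- last coordinate formula
    have hIci : Ici m = {m} := by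
      ext d
      simp only [mem_Ici, mem_singleton, Fin.le_def]
      have := d.isLt
      constructor
      · intro h; exact Fin.ext (by omega)
      · intro h; omega
    have hIic : Iic m = Finset.univ := by
      ext d
      have := d.isLt
      simp only [mem_Iic, mem_univ, iff_true, Fin.le_def, hmv]
      omega
    have hnext : nextCutoff p m = 1 := by
      unfold nextCutoff; rw [dif_neg]; rw [hmv]; omega
    have h := hsys m
    rw [hIci, Finset.sum_singleton, hIic, hγsum, hnext, div_one] at h
    have hne : (1 : ℝ) - p m ≠ 0 := by linarith [hp1 m]
    rw [h, mul_div_cancel_right₀ _ hne]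
  · -- recursion formula
    intro c _
    have hS := mnl_aux_Spos hn p hp hp1 γ hγ c
    have hfac := mnl_aux_fac p D γ hsys c
    have hrw : (∑ d ∈ Ici c, (nextCutoff p d - p d) / (1 - ∑ j ∈ Ioi d, γ j)) =
        ∑ d ∈ Ici c, (nextCutoff p d - p d) / (∑ i ∈ Iic d, γ i) :=
      Finset.sum_congr rfl fun d _ => by rw [mnl_aux_compl γ hγsum d]
    rw [hrw, hfac, mul_div_assoc, div_self hS.ne', mul_one]
  · -- uniqueness
    intro γ' hγ' hγ'sum hsys'
    have agree : ∀ c : Fin n, (∀ j : Fin n, c < j → γ' j = γ j) → γ' c = γ c := by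
      intro c htail
      have hAe : ∀ d ∈ Ici c, (nextCutoff p d - p d) / (∑ i ∈ Iic d, γ' i)
          = (nextCutoff p d - p d) / (∑ i ∈ Iic d, γ i) := by
        intro d hd
        rw [mem_Ici] at hd
        have : (∑ j ∈ Ioi d, γ' j) = ∑ j ∈ Ioi d, γ j :=
          Finset.sum_congr rfl fun j hj => htail j (lt_of_le_of_lt hd (mem_Ioi.mp hj))
        rw [mnl_aux_compl γ' hγ'sum d, mnl_aux_compl γ hγsum d, this]
      have h1 := mnl_aux_fac p D γ' hsys' c
      have h2 := mnl_aux_fac p D γ hsys c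
      rw [Finset.sum_congr rfl hAe] at h1
      have hS := mnl_aux_Spos hn p hp hp1 γ hγ c
      have := h1.symm.trans h2
      exact mul_right_cancel₀ hS.ne' this
    have main : ∀ k : ℕ, ∀ c : Fin n, n - 1 - (c : ℕ) ≤ k → γ' c = γ c := by
      intro k
      induction k with
      | zero =>
        intro c hc
        apply agree
        intro j hj
        have := j.isLt
        have := Fin.lt_def.mp hj
        omega
      | succ k ih =>
        intro c hc
        apply agree
        intro j hj
        apply ih
        have := j.isLt
        have := Fin.lt_def.mp hj
        omega
    funext c
    exact main (n - 1 - (c : ℕ)) c le_rfl
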